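/- Let f, g: V → V^{⊗n} be descendant binary tree operators on V = K^3 (compositions of maps id^{⊗p}⊗λ⊗id^{⊗q}, with λ(eᵢ)=eⱼ⊗eₖ+eₖ⊗eⱼ), and let f* be the adjoint of f. Then f*∘g = ⟨g(e₁), f(e₁)⟩ · id_V; in particular ⟨g(e₁),f(e₁)⟩ = ⟨g(e₂),f(e₂)⟩ = ⟨g(e₃),f(e₃)⟩ and ⟨g(eᵢ),f(eⱼ)⟩ = 0 for i ≠ j. -/

import Mathlib

noncomputable section

/-- The model of `V^{⊗ n}` as the free `K`-module on colorings `Fin n → Fin 3`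
(the canonical tensor basis of `(K^3)^{⊗ n}`). -/
abbrev W (K : Type*) [Field K] (n : ℕ) := (Fin n → Fin 3) → K

/-- Insert the pair of colors `(a, b)` at position `p`, replacing the color `c p`. -/
def ins {n : ℕ} (p : Fin n) (c : Fin n → Fin 3) (a b : Fin 3) : Fin (n + 1) → Fin 3 :=
  fun q =>
    if h1 : q.val < p.val then c ⟨q.val, by have := p.isLt; omega⟩
    else if h2 : q.val = p.val then a
    else if h3 : q.val = p.val + 1 then b
    else c ⟨q.val - 1, by have := q.isLt; omega⟩

/-- The operator `id^{⊗ p} ⊗ λ ⊗ id^{⊗ (n - 1 - p)} : V^{⊗ n} → V^{⊗ (n+1)}`, where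
`λ` is the Penrose splitting `λ(e_i) = e_j ⊗ e_k + e_k ⊗ e_j` for `{i,j,k} = {1,2,3}`
(colors are elements of `Fin 3 = ℤ/3`, so the two splittings of `i` are
`(i+1, i+2)` and `(i+2, i+1)`). -/
def treeStep (K : Type*) [Field K] {n : ℕ} (p : Fin n) : W K n →ₗ[K] W K (n + 1) :=
  (Pi.basisFun K (Fin n → Fin 3)).constr K fun c =>
    Pi.single (ins p c (c p + 1) (c p + 2)) 1 + Pi.single (ins p c (c p + 2) (c p + 1)) 1

/-- Descendant binary tree operators `V → V^{⊗ n}`: compositions of maps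
`id^{⊗ p} ⊗ λ ⊗ id^{⊗ q}` starting from `id_V`. -/
inductive IsTree (K : Type*) [Field K] : {n : ℕ} → (W K 1 →ₗ[K] W K n) → Prop
  | id : IsTree K LinearMap.id
  | step {n : ℕ} (p : Fin n) {g : W K 1 →ₗ[K] W K n} :
      IsTree K g → IsTree K (treeStep K p ∘ₗ g)

/-- The basis vector `e_i` of `V = W K 1`. -/
def eW (K : Type*) [Field K] (i : Fin 3) : W K 1 := Pi.single (fun _ => i) 1

/-- The inner product on `V^{⊗ n}` making the canonical tensor basis orthonormal. -/
def ip {K : Type*} [Field K] {n : ℕ} (f g : W K n) : K := ∑ c, f c * g c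


variable {K : Type*} [Field K]

lemma treeStep_single {n : ℕ} (p : Fin n) (d : Fin n → Fin 3) :
    treeStep K p (Pi.single d 1) =
      Pi.single (ins p d (d p + 1) (d p + 2)) 1 + Pi.single (ins p d (d p + 2) (d p + 1)) 1 := by
  have h := (Pi.basisFun K (Fin n → Fin 3)).constr_basis K
      (fun c => (Pi.single (ins p c (c p + 1) (c p + 2)) 1 : W K (n + 1))
        + Pi.single (ins p c (c p + 2) (c p + 1)) 1) d
  rw [Pi.basisFun_apply] at h
  exact h

lemma ins_castSucc {n : ℕ} (p : Fin n) (c : Fin n → Fin 3) (a b : Fin 3) :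
    ins p c a b p.castSucc = a := by
  simp [ins]

lemma ins_succAbove {n : ℕ} (p : Fin n) (c : Fin n → Fin 3) (a b : Fin 3) (i : Fin n) :
    ins p c a b (p.castSucc.succAbove i) = if i = p then b else c i := by
  rcases lt_trichotomy i p with h | h | h
  · rw [if_neg (ne_of_lt h), Fin.succAbove_of_castSucc_lt _ _ (by rwa [Fin.castSucc_lt_castSucc_iff])]
    have hv : (i.castSucc : Fin (n + 1)).val < p.val := h
    simp only [ins]
    rw [dif_pos hv]
    exact congrArg c (Fin.ext rfl)
  · subst h
    rw [if_pos rfl, Fin.succAbove_of_le_castSucc _ _ le_rfl]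
    simp only [ins, Fin.val_succ]
    split_ifs <;> first | rfl | (exfalso; omega)
  · have hv : p.val < i.val := h
    rw [if_neg (ne_of_gt h), Fin.succAbove_of_le_castSucc _ _ (Fin.castSucc_le_castSucc_iff.mpr h.le)]
    simp only [ins, Fin.val_succ]
    split_ifs <;> first
      | (exfalso; omega)
      | (exact congrArg c (Fin.ext (by simp)))

lemma prod_ins {M : Type*} [CommMonoid M] (F : Fin 3 → M) {n : ℕ} (p : Fin n)
    (d : Fin n → Fin 3) (a b : Fin 3) (hab : F a * F b = F (d p)) :
    ∏ q : Fin (n + 1), F (ins p d a b q) = ∏ q, F (d q) := by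
  rw [Fin.prod_univ_succAbove (fun q => F (ins p d a b q)) p.castSucc]
  simp only [ins_castSucc, ins_succAbove]
  have h1 : ∀ i : Fin n, F (if i = p then b else d i) = if i = p then F b else F (d i) := by
    intro i; split_ifs <;> rfl
  rw [Finset.prod_congr rfl (fun i _ => h1 i),
    ← Finset.mul_prod_erase Finset.univ (fun i => if i = p then F b else F (d i))
      (Finset.mem_univ p), if_pos rfl,
    Finset.prod_congr rfl (fun i hi => if_neg (Finset.ne_of_mem_erase hi)), ← mul_assoc, hab]
  exact Finset.mul_prod_erase Finset.univ (fun q => F (d q)) (Finset.mem_univ p)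

/-- The diagonal "sign" operator. -/
def signW (t : Fin 3 → K) {n : ℕ} : W K n →ₗ[K] W K n where
  toFun x := fun c => (∏ q, t (c q)) * x c
  map_add' x y := by funext c; simp [mul_add]
  map_smul' a x := by funext c; simp only [Pi.smul_apply, smul_eq_mul, RingHom.id_apply]; ring

/-- The color-shift operator. -/
def shiftW (s : Fin 3) {n : ℕ} : W K n →ₗ[K] W K n where
  toFun x := fun c => x (fun q => c q - s)
  map_add' x y := rfl
  map_smul' a x := rfl

lemma signW_single (t : Fin 3 → K) {n : ℕ} (u : Fin n → Fin 3) :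
    signW t (Pi.single u (1 : K)) = (∏ q, t (u q)) • (Pi.single u 1 : W K n) := by
  funext c
  simp only [signW, LinearMap.coe_mk, AddHom.coe_mk, Pi.smul_apply, Pi.single_apply,
    smul_eq_mul]
  by_cases h : c = u
  · subst h; simp
  · simp [h]

lemma shiftW_single (s : Fin 3) {n : ℕ} (u : Fin n → Fin 3) :
    shiftW s (Pi.single u (1 : K)) = Pi.single (fun q => u q + s) 1 := by
  funext c
  simp only [shiftW, LinearMap.coe_mk, AddHom.coe_mk, Pi.single_apply]
  have h : ((fun q => c q - s) = u) ↔ (c = fun q => u q + s) := by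
    rw [funext_iff, funext_iff]
    exact forall_congr' fun q => sub_eq_iff_eq_add
  rw [if_congr h rfl rfl]

lemma ins_add {n : ℕ} (p : Fin n) (d : Fin n → Fin 3) (a b s : Fin 3) :
    (fun q => ins p d a b q + s) = ins p (fun r => d r + s) (a + s) (b + s) := by
  funext q
  simp only [ins]
  split_ifs <;> rfl

lemma sign_step (t : Fin 3 → K) (ht : ∀ k, t (k + 1) * t (k + 2) = t k) {n : ℕ} (p : Fin n) :
    signW t ∘ₗ treeStep K p = treeStep K p ∘ₗ signW t := by
  apply Module.Basis.ext (Pi.basisFun K (Fin n → Fin 3))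
  intro d
  rw [Pi.basisFun_apply]
  simp only [LinearMap.comp_apply, treeStep_single, map_add, signW_single, map_smul,
    treeStep_single]
  rw [prod_ins t p d _ _ (ht (d p)), prod_ins t p d _ _ (by rw [mul_comm]; exact ht (d p)),
    smul_add]

lemma shift_step (s : Fin 3) {n : ℕ} (p : Fin n) :
    shiftW s ∘ₗ treeStep K p = treeStep K p ∘ₗ shiftW s := by
  apply Module.Basis.ext (Pi.basisFun K (Fin n → Fin 3))
  intro d
  rw [Pi.basisFun_apply]
  simp only [LinearMap.comp_apply, treeStep_single, map_add, shiftW_single]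
  rw [ins_add, ins_add]
  have h1 : d p + 1 + s = (fun r => d r + s) p + 1 := by simp only; exact add_right_comm _ _ _
  have h2 : d p + 2 + s = (fun r => d r + s) p + 2 := by simp only; exact add_right_comm _ _ _
  rw [h1, h2]

lemma sign_tree (t : Fin 3 → K) (ht : ∀ k, t (k + 1) * t (k + 2) = t k) {n : ℕ}
    {f : W K 1 →ₗ[K] W K n} (hf : IsTree K f) : signW t ∘ₗ f = f ∘ₗ signW t := by
  induction hf with
  | id => rw [LinearMap.comp_id, LinearMap.id_comp]
  | step p hg ih =>
      rw [← LinearMap.comp_assoc, sign_step t ht, LinearMap.comp_assoc, ih,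
        ← LinearMap.comp_assoc]

lemma shift_tree (s : Fin 3) {n : ℕ}
    {f : W K 1 →ₗ[K] W K n} (hf : IsTree K f) : shiftW s ∘ₗ f = f ∘ₗ shiftW s := by
  induction hf with
  | id => rw [LinearMap.comp_id, LinearMap.id_comp]
  | step p hg ih =>
      rw [← LinearMap.comp_assoc, shift_step, LinearMap.comp_assoc, ih,
        ← LinearMap.comp_assoc]

lemma signW_eW (t : Fin 3 → K) (i : Fin 3) : signW t (eW K i) = t i • eW K i := by
  rw [eW, signW_single]
  congr 1
  simp

lemma shiftW_eW (s : Fin 3) (i : Fin 3) : shiftW s (eW K i) = eW K (i + s) := by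
  rw [eW, shiftW_single, eW]

lemma ip_comm {n : ℕ} (x y : W K n) : ip x y = ip y x := by
  simp [ip, mul_comm]

lemma ip_smul_left {n : ℕ} (a : K) (x y : W K n) : ip (a • x) y = a * ip x y := by
  simp only [ip, Pi.smul_apply, smul_eq_mul, Finset.mul_sum]
  exact Finset.sum_congr rfl fun c _ => by ring

lemma ip_smul_right {n : ℕ} (a : K) (x y : W K n) : ip x (a • y) = a * ip x y := by
  rw [ip_comm, ip_smul_left, ip_comm]

lemma ip_sign {n : ℕ} (t : Fin 3 → K) (x y : W K n) :
    ip (signW t x) y = ip x (signW t y) := by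
  simp only [ip, signW, LinearMap.coe_mk, AddHom.coe_mk]
  exact Finset.sum_congr rfl fun c _ => by ring

lemma ip_shift {n : ℕ} (s : Fin 3) (x y : W K n) :
    ip (shiftW s x) (shiftW s y) = ip x y := by
  simp only [ip, shiftW, LinearMap.coe_mk, AddHom.coe_mk]
  exact Fintype.sum_equiv (Equiv.piCongrRight fun _ => Equiv.subRight s)
    _ _ (fun c => rfl)

lemma ip_eW {k : Fin 3} (z : W K 1) : ip (eW K k) z = z (fun _ => k) := by
  simp only [ip, eW, Pi.single_apply]
  rw [Finset.sum_congr rfl (fun c _ => by rw [ite_mul, one_mul, zero_mul]),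
    Finset.sum_ite_eq' Finset.univ (fun _ => k) z]
  simp

end

/-- For descendant binary tree operators `f, g : V → V^{⊗ n}` and the adjoint `f*` of
`f`, we have `f* ∘ g = ⟨g e₁, f e₁⟩ • id_V`; in particular the inner products
`⟨g eᵢ, f eᵢ⟩` coincide for `i = 1, 2, 3` and `⟨g eᵢ, f eⱼ⟩ = 0` for `i ≠ j`. -/
theorem stmt16 (K : Type*) [Field K] [CharZero K]
    {n : ℕ} (f g : W K 1 →ₗ[K] W K n) (hf : IsTree K f) (hg : IsTree K g)
    (fstar : W K n →ₗ[K] W K 1)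
    (hadj : ∀ (v : W K 1) (w : W K n), ip (f v) w = ip v (fstar w)) :
    fstar ∘ₗ g = ip (g (eW K 0)) (f (eW K 0)) • LinearMap.id ∧
    (∀ i j : Fin 3, i ≠ j → ip (g (eW K i)) (f (eW K j)) = 0) ∧
    (∀ i j : Fin 3, ip (g (eW K i)) (f (eW K i)) = ip (g (eW K j)) (f (eW K j))) := by
  have offdiag : ∀ i j : Fin 3, i ≠ j → ip (g (eW K i)) (f (eW K j)) = 0 := by
    intro i j hij
    set t : Fin 3 → K := fun k => if k = i then 1 else -1 with hts
    have ht : ∀ k, t (k + 1) * t (k + 2) = t k := by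
      intro k
      fin_cases i <;> fin_cases k <;> simp only [hts] <;> split_ifs <;> simp_all (config := {decide := true})
    have hg' := congrArg (fun h => h (eW K i)) (sign_tree t ht hg)
    have hf' := congrArg (fun h => h (eW K j)) (sign_tree t ht hf)
    simp only [LinearMap.comp_apply] at hg' hf'
    have e1 : ip (signW t (g (eW K i))) (f (eW K j)) = t i * ip (g (eW K i)) (f (eW K j)) := by
      rw [hg', signW_eW, map_smul, ip_smul_left]
    have e2 : ip (signW t (g (eW K i))) (f (eW K j)) = t j * ip (g (eW K i)) (f (eW K j)) := by
      rw [ip_sign, hf', signW_eW, map_smul, ip_smul_right]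
    have hti : t i = 1 := if_pos rfl
    have htj : t j = -1 := if_neg (Ne.symm hij)
    rw [hti, one_mul] at e1
    rw [htj] at e2
    have h2 := e1.symm.trans e2
    have h3 : (2 : K) * ip (g (eW K i)) (f (eW K j)) = 0 := by linear_combination h2
    exact ((mul_eq_zero.mp h3).resolve_left two_ne_zero)
  have diag : ∀ i j : Fin 3, ip (g (eW K i)) (f (eW K i)) = ip (g (eW K j)) (f (eW K j)) := by
    intro i j
    have hg' := congrArg (fun h => h (eW K i)) (shift_tree (j - i) hg)
    have hf' := congrArg (fun h => h (eW K i)) (shift_tree (j - i) hf)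
    simp only [LinearMap.comp_apply] at hg' hf'
    have hsh := ip_shift (j - i) (g (eW K i)) (f (eW K i))
    rw [hg', hf', shiftW_eW] at hsh
    have hij : i + (j - i) = j := by abel
    rw [hij] at hsh
    exact hsh.symm
  have main : ∀ i : Fin 3, fstar (g (eW K i)) = ip (g (eW K 0)) (f (eW K 0)) • eW K i := by
    intro i
    funext c
    have hc : c = fun _ => c 0 := by funext q; rw [Subsingleton.elim q 0]
    have lhs : fstar (g (eW K i)) c = ip (g (eW K i)) (f (eW K (c 0))) := by
      conv_lhs => rw [hc]
      rw [← ip_eW (k := c 0) (fstar (g (eW K i))), ← hadj, ip_comm]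
    rw [lhs]
    by_cases h : c 0 = i
    · rw [h, diag i 0]
      have : eW K i c = 1 := by
        rw [eW, Pi.single_apply, if_pos (by rw [hc, h])]
      simp only [Pi.smul_apply, smul_eq_mul, this, mul_one]
    · rw [offdiag i (c 0) (fun hh => h hh.symm)]
      have : eW K i c = 0 := by
        rw [eW, Pi.single_apply, if_neg (fun hh => h (by rw [hc] at hh; exact congrFun hh 0))]
      simp only [Pi.smul_apply, smul_eq_mul, this, mul_zero]
  refine ⟨?_, offdiag, diag⟩
  apply Module.Basis.ext (Pi.basisFun K (Fin 1 → Fin 3))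
  intro d
  rw [Pi.basisFun_apply]
  have hd0 : d = fun _ => d 0 := funext fun q => congrArg d (Subsingleton.elim q 0)
  have hd : (Pi.single d 1 : W K 1) = eW K (d 0) := by
    rw [eW]; exact congrArg (fun u => Pi.single u (1 : K)) hd0
  rw [hd]
  simp only [LinearMap.comp_apply, LinearMap.smul_apply, LinearMap.id_apply]
  exact main (d 0)
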